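/- A probability distribution function F on ℝ satisfying the functional equation F'(y) = (1 - F(-y))(1 - F(y)) for all y must be the logistic distribution function F(y) = (1 + e^{-y})^{-1}. -/

import Mathlib

open Filter

theorem logistic_characterization (F : ℝ → ℝ)
    (hmono : Monotone F)
    (hbot : Tendsto F atBot (nhds 0))
    (htop : Tendsto F atTop (nhds 1))
    (hderiv : ∀ y : ℝ, HasDerivAt F ((1 - F (-y)) * (1 - F y)) y) :
    ∀ y : ℝ, F y = (1 + Real.exp (-y))⁻¹ := by
  have hF0 : ∀ y, 0 ≤ F y := fun y =>
    le_of_tendsto hbot (eventually_atBot.2 ⟨y, fun t ht => hmono ht⟩)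
  have hF1 : ∀ y, F y ≤ 1 := fun y =>
    ge_of_tendsto htop (eventually_atTop.2 ⟨y, fun t ht => hmono ht⟩)
  -- symmetry
  have hd : ∀ y, HasDerivAt (fun y => F y + F (-y)) 0 y := by
    intro y
    have h2 : HasDerivAt (fun y : ℝ => F (-y)) (-((1 - F y) * (1 - F (-y)))) y := by
      have := (hderiv (-y)).comp y (hasDerivAt_neg y)
      simpa [neg_neg, mul_comm, Function.comp_def] using this
    have : HasDerivAt (fun y => F y + F (-y))
        ((1 - F (-y)) * (1 - F y) + -((1 - F y) * (1 - F (-y)))) y := (hderiv y).add h2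
    convert this using 1
    ring
  have hconst : ∀ y, F y + F (-y) = F 0 + F 0 := by
    intro y
    have := is_const_of_deriv_eq_zero (f := fun y => F y + F (-y))
      (fun x => (hd x).differentiableAt) (fun x => (hd x).deriv) y 0
    simpa using this
  have hlim : Tendsto (fun t => F t + F (-t)) atTop (nhds 1) := by
    have := htop.add (hbot.comp tendsto_neg_atTop_atBot)
    simpa using this
  have hsum : F 0 + F 0 = 1 := by
    have := tendsto_nhds_unique (hlim.congr hconst) tendsto_const_nhds
    linarith
  have hS : ∀ y, F y + F (-y) = 1 := fun y => (hconst y).trans hsum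
  have hhalf : F 0 = 1 / 2 := by have := hsum; linarith
  -- logistic ODE
  have hode : ∀ y, HasDerivAt F (F y * (1 - F y)) y := by
    intro y
    have h : 1 - F (-y) = F y := by have := hS y; linarith
    have := hderiv y
    rwa [h] at this
  -- positivity
  have hpos : ∀ y, 0 < F y := by
    intro a
    by_contra h
    have ha : F a = 0 := le_antisymm (not_lt.1 h) (hF0 a)
    have hzero : ∀ b, a ≤ b → F b = 0 := by
      intro b hab
      have key := norm_le_gronwallBound_of_norm_deriv_right_le
        (f := F) (f' := fun y => F y * (1 - F y)) (δ := 0) (K := 1) (ε := 0)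
        (a := a) (b := b)
        (fun x _ => (hode x).continuousAt.continuousWithinAt)
        (fun x _ => (hode x).hasDerivWithinAt)
        (by simp [ha])
        (by
          intro x hx1
          have h1 : ‖F x * (1 - F x)‖ = F x * (1 - F x) := by
            rw [Real.norm_eq_abs, abs_of_nonneg]
            exact mul_nonneg (hF0 x) (by linarith [hF1 x])
          have h2 : ‖F x‖ = F x := by
            rw [Real.norm_eq_abs, abs_of_nonneg (hF0 x)]
          rw [h1, h2]
          nlinarith [hF0 x, hF1 x]) b ⟨hab, le_refl b⟩
      rw [gronwallBound_ε0] at key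
      simp at key
      exact key
    have : Tendsto F atTop (nhds 0) := by
      refine Tendsto.congr' ?_ tendsto_const_nhds
      filter_upwards [eventually_ge_atTop a] with b hb
      exact (hzero b hb).symm
    have : (0 : ℝ) = 1 := tendsto_nhds_unique this htop
    norm_num at this
  have hlt1 : ∀ y, F y < 1 := by
    intro y
    have := hpos (-y)
    have := hS y
    linarith
  -- integrate
  set g : ℝ → ℝ := fun y => Real.log (F y) - Real.log (1 - F y) - y with hg_def
  have hgd : ∀ y, HasDerivAt g 0 y := by
    intro y
    have hne : F y ≠ 0 := ne_of_gt (hpos y)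
    have hne1 : 1 - F y ≠ 0 := by have := hlt1 y; intro hc; linarith [sub_eq_zero.1 hc]
    have h1 : HasDerivAt (fun y => Real.log (F y)) (F y * (1 - F y) / F y) y :=
      (hode y).log hne
    have h2 : HasDerivAt (fun y => Real.log (1 - F y))
        ((0 - F y * (1 - F y)) / (1 - F y)) y :=
      (((hasDerivAt_const y (1:ℝ)).sub (hode y)).log hne1)
    have h3 := (h1.sub h2).sub (hasDerivAt_id y)
    have heq : F y * (1 - F y) / F y - (0 - F y * (1 - F y)) / (1 - F y) - 1 = 0 := by
      field_simp
      ring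
    rw [heq] at h3
    exact h3
  have hgconst : ∀ y, g y = g 0 := by
    intro y
    exact is_const_of_deriv_eq_zero (fun x => (hgd x).differentiableAt)
      (fun x => (hgd x).deriv) y 0
  have hg0 : g 0 = 0 := by
    have h12 : (1:ℝ) - F 0 = 1/2 := by rw [hhalf]; norm_num
    simp only [hg_def]
    rw [h12, hhalf]
    ring
  intro y
  have hlog : Real.log (F y) - Real.log (1 - F y) = y := by
    have := (hgconst y).trans hg0
    simp only [hg_def] at this
    linarith
  have hne : F y ≠ 0 := ne_of_gt (hpos y)
  have hpos1 : 0 < 1 - F y := by linarith [hlt1 y]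
  have hexp : F y / (1 - F y) = Real.exp y := by
    rw [← Real.exp_log (div_pos (hpos y) hpos1), Real.log_div hne (ne_of_gt hpos1), hlog]
  have hE : 0 < Real.exp y := Real.exp_pos y
  rw [Real.exp_neg]
  rw [div_eq_iff (ne_of_gt hpos1)] at hexp
  field_simp
  nlinarith [hexp]
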